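/- Let Φ ∈ ℝ^{N×N} be an invertible matrix with unit-norm columns that is not orthogonal. Then there exists a vector d ∈ ℝ^N with ‖d‖ > 1 and a sign vector a with a_i ∈ {±1/√N} for all i such that Φ^T d = a. -/

import Mathlib

open scoped BigOperators

open Matrix

private lemma sign_sum_aux (N : ℕ) (i j : Fin N) :
    ∑ ε : Fin N → Bool,
      (if ε i then (1:ℝ) else -1) * (if ε j then (1:ℝ) else -1)
      = if i = j then (2:ℝ)^N else 0 := by
  classical
  by_cases h : i = j
  · subst h
    have : ∀ ε : Fin N → Bool,
        (if ε i then (1:ℝ) else -1) * (if ε i then (1:ℝ) else -1) = 1 := by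
      intro ε; by_cases hb : ε i <;> simp [hb]
    rw [Finset.sum_congr rfl (fun ε _ => this ε), if_pos rfl]
    simp [Finset.card_univ]
  · rw [if_neg h]
    set f : (Fin N → Bool) → ℝ :=
      fun ε => (if ε i then (1:ℝ) else -1) * (if ε j then (1:ℝ) else -1) with hf
    have hinvol : Function.Involutive
        (fun ε : Fin N → Bool => Function.update ε i (!(ε i))) := by
      intro ε; funext k
      by_cases hk : k = i
      · subst hk; simp [Function.update]
      · simp [Function.update, hk]
    set e := hinvol.toPerm with he
    have h1 : ∑ ε, f (e ε) = ∑ ε, f ε := Equiv.sum_comp e f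
    have h2 : ∀ ε, f (e ε) = - f ε := by
      intro ε
      have hi : (e ε) i = !(ε i) := by
        show Function.update ε i (!(ε i)) i = !(ε i)
        simp
      have hj : (e ε) j = ε j := by
        show Function.update ε i (!(ε i)) j = ε j
        exact Function.update_of_ne (fun hc => h hc.symm) _ _
      rw [hf]
      simp only [hi, hj]
      by_cases hb : ε i <;> by_cases hb' : ε j <;> simp [hb, hb']
    rw [Finset.sum_congr rfl (fun ε _ => h2 ε)] at h1
    rw [Finset.sum_neg_distrib] at h1
    linarith

/-- For a non-orthogonal invertible matrix Φ with unit-norm columns, there exist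
d with ‖d‖ > 1 and a with |a_i| = 1/√N such that Φᵀ d = a. -/
theorem exists_long_vector_sign_pattern (N : ℕ) (Φ : Matrix (Fin N) (Fin N) ℝ)
    (hunit : ∀ j, ∑ i, (Φ i j) ^ 2 = 1)
    (hinv : IsUnit Φ.det)
    (hnotunitary : Φ.transpose * Φ ≠ 1) :
    ∃ (d a : Fin N → ℝ),
      (∀ i, a i = 1 / Real.sqrt N ∨ a i = -(1 / Real.sqrt N)) ∧
      Φ.transpose.mulVec d = a ∧ 1 < ∑ i, (d i) ^ 2 := by
  classical
  rcases Nat.eq_zero_or_pos N with hN | hN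
  · exfalso; apply hnotunitary; subst hN; exact Subsingleton.elim _ _
  have hNR : (0:ℝ) < N := by exact_mod_cast hN
  set A := Φᵀ * Φ with hA
  have hdetA : IsUnit A.det := by
    rw [hA, Matrix.det_mul, Matrix.det_transpose]; exact hinv.mul hinv
  have hAA : A * A⁻¹ = 1 := Matrix.mul_nonsing_inv A hdetA
  have hAA' : A⁻¹ * A = 1 := Matrix.nonsing_inv_mul A hdetA
  set B := A⁻¹ with hB
  -- A is positive definite
  have hApos : A.PosDef := by
    refine Matrix.PosDef.of_dotProduct_mulVec_pos (by have := Matrix.isHermitian_conjTranspose_mul_self Φ; rwa [Matrix.conjTranspose_eq_transpose_of_trivial] at this) fun x hx => ?_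
    have hy : Φ *ᵥ x ≠ 0 := by
      intro h0
      exact hx (Matrix.mulVec_injective_iff_isUnit.2 (isUnit_iff_isUnit_det Φ |>.2 hinv)
        (by simpa using h0))
    have hrw : star x ⬝ᵥ A *ᵥ x = (Φ *ᵥ x) ⬝ᵥ (Φ *ᵥ x) := by
      rw [star_trivial, hA, ← Matrix.mulVec_mulVec, Matrix.dotProduct_mulVec,
        Matrix.vecMul_transpose]
    rw [hrw]
    obtain ⟨k, hk⟩ := Function.ne_iff.1 hy
    refine Finset.sum_pos' (fun i _ => mul_self_nonneg _) ⟨k, Finset.mem_univ k, ?_⟩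
    exact mul_self_pos.2 hk
  have hBpos : B.PosDef := hApos.inv
  have hBsd : B.PosSemidef := hBpos.posSemidef
  -- trace of A is N
  have htrA : A.trace = (N : ℝ) := by
    rw [Matrix.trace]
    have : ∀ j, A.diag j = 1 := by
      intro j
      have := hunit j
      simp only [Matrix.diag, hA, Matrix.mul_apply, Matrix.transpose_apply]
      rw [← this]
      exact Finset.sum_congr rfl (fun i _ => by ring)
    rw [Finset.sum_congr rfl (fun j _ => this j)]
    simp
  -- C := A - 1 is nonzero
  set C := A - 1 with hC
  have hCne : C ≠ 0 := by
    intro h0; exact hnotunitary (sub_eq_zero.mp h0)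
  have hCsym : Cᵀ = C := by
    rw [hC, Matrix.transpose_sub, Matrix.transpose_one]
    rw [hA, Matrix.transpose_mul, Matrix.transpose_transpose]
  -- trace identity: tr(B) = N + tr(B*C*C)
  have hBCC : B * C * C = A - 2 • (1 : Matrix (Fin N) (Fin N) ℝ) + B := by
    have h1 : B * C = 1 - B := by rw [hC, Matrix.mul_sub, hAA', Matrix.mul_one]
    rw [h1, hC]
    rw [Matrix.sub_mul, Matrix.one_mul, Matrix.mul_sub, Matrix.mul_one, hAA']
    abel
  have htrBCC : (B * C * C).trace = B.trace - N := by
    rw [hBCC, Matrix.trace_add, Matrix.trace_sub, Matrix.trace_smul, Matrix.trace_one,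
      htrA]
    simp [Finset.card_univ]
    ring
  -- positivity of tr(C*B*C)
  have hcycle : (B * C * C).trace = (C * B * C).trace := by
    rw [Matrix.trace_mul_cycle]
  have hdiag : ∀ j, (C * B * C) j j
      = (fun k => C k j) ⬝ᵥ B *ᵥ (fun k => C k j) := by
    intro j
    have hCC : ∀ l, C j l = C l j := by
      intro l; conv_lhs => rw [← hCsym]
      simp
    simp only [Matrix.mul_apply, dotProduct, Matrix.mulVec, dotProduct,
      Finset.sum_mul, Finset.mul_sum]
    rw [Finset.sum_comm]
    refine Finset.sum_congr rfl (fun l _ => Finset.sum_congr rfl (fun k _ => ?_))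
    rw [hCC l]; ring
  have htrpos : 0 < (C * B * C).trace := by
    obtain ⟨k, j, hkj⟩ : ∃ k j, C k j ≠ 0 := by
      by_contra hcon
      push_neg at hcon
      exact hCne (by ext k j; exact hcon k j)
    rw [Matrix.trace]
    refine Finset.sum_pos' (fun l _ => ?_) ⟨j, Finset.mem_univ j, ?_⟩
    · rw [Matrix.diag, hdiag l]
      have := hBsd.dotProduct_mulVec_nonneg (fun k => C k l)
      simpa using this
    · rw [Matrix.diag, hdiag j]
      have hvne : (fun k => C k j) ≠ 0 := by
        intro h0
        exact hkj (congrFun h0 k)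
      have := hBpos.dotProduct_mulVec_pos hvne
      simpa using this
  have htrB : (N : ℝ) < B.trace := by
    have := htrBCC
    rw [hcycle] at this
    linarith
  -- sign vectors
  set s : (Fin N → Bool) → Fin N → ℝ :=
    fun ε i => if ε i then (1:ℝ) else -1 with hs
  set av : (Fin N → Bool) → Fin N → ℝ :=
    fun ε i => s ε i / Real.sqrt N with hav
  set Q : (Fin N → Bool) → ℝ := fun ε => av ε ⬝ᵥ B *ᵥ av ε with hQ
  have hsqrt : Real.sqrt N * Real.sqrt N = N :=
    Real.mul_self_sqrt (le_of_lt hNR)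
  have hQeq : ∀ ε, Q ε = (1 / N) * ∑ i, ∑ j, (s ε i * s ε j) * B i j := by
    intro ε
    rw [hQ]
    simp only [dotProduct, Matrix.mulVec, dotProduct, hav,
      Finset.mul_sum]
    refine Finset.sum_congr rfl (fun i _ => Finset.sum_congr rfl (fun j _ => ?_))
    field_simp
    rw [Real.sq_sqrt hNR.le]
    ring
  have htotal : ∑ ε, Q ε = (2:ℝ)^N / N * B.trace := by
    rw [Finset.sum_congr rfl (fun ε _ => hQeq ε), ← Finset.mul_sum]
    rw [Finset.sum_comm]
    have hswap : ∀ i : Fin N, ∑ ε : Fin N → Bool, ∑ j, (s ε i * s ε j) * B i j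
        = ∑ j, (∑ ε : Fin N → Bool, s ε i * s ε j) * B i j := by
      intro i
      rw [Finset.sum_comm]
      exact Finset.sum_congr rfl (fun j _ => by rw [Finset.sum_mul])
    rw [Finset.sum_congr rfl (fun i _ => hswap i)]
    have hinner : ∀ i : Fin N, ∑ j, (∑ ε : Fin N → Bool, s ε i * s ε j) * B i j
        = (2:ℝ)^N * B i i := by
      intro i
      have : ∀ j, (∑ ε : Fin N → Bool, s ε i * s ε j) * B i j
          = (if i = j then (2:ℝ)^N else 0) * B i j := by
        intro j; rw [hs]; rw [sign_sum_aux N i j]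
      rw [Finset.sum_congr rfl (fun j _ => this j)]
      simp [ite_mul]
    rw [Finset.sum_congr rfl (fun i _ => hinner i), ← Finset.mul_sum, Matrix.trace]
    simp only [Matrix.diag]
    ring
  -- existence of a good sign vector
  have hexists : ∃ ε : Fin N → Bool, 1 < Q ε := by
    by_contra hcon
    push_neg at hcon
    have hle : ∑ ε, Q ε ≤ ∑ ε : Fin N → Bool, (1:ℝ) :=
      Finset.sum_le_sum (fun ε _ => hcon ε)
    rw [Finset.sum_const, Finset.card_univ, nsmul_eq_mul, mul_one] at hle
    have hcard : (Fintype.card (Fin N → Bool) : ℝ) = (2:ℝ)^N := by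
      rw [Fintype.card_fun, Fintype.card_bool, Fintype.card_fin]
      push_cast; ring
    rw [hcard] at hle
    have hgt : (2:ℝ)^N < ∑ ε, Q ε := by
      rw [htotal]
      have h2 : (0:ℝ) < (2:ℝ)^N / N := by positivity
      calc (2:ℝ)^N = (2:ℝ)^N / N * N := by field_simp
        _ < (2:ℝ)^N / N * B.trace := by exact mul_lt_mul_of_pos_left htrB h2
    linarith
  obtain ⟨ε, hε⟩ := hexists
  -- construct d and a
  set a : Fin N → ℝ := av ε with ha
  set M := (Φᵀ)⁻¹ with hM
  set d : Fin N → ℝ := M *ᵥ a with hd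
  refine ⟨d, a, ?_, ?_, ?_⟩
  · intro i
    rw [ha, hav]
    by_cases hb : ε i
    · left; rw [hs]; simp [hb]
    · right; rw [hs]; simp [hb]; ring
  · rw [hd, Matrix.mulVec_mulVec, hM,
      Matrix.mul_nonsing_inv _ (by rw [Matrix.det_transpose]; exact hinv),
      Matrix.one_mulVec]
  · have hMM : Mᵀ * M = B := by
      rw [hM, Matrix.transpose_nonsing_inv, Matrix.transpose_transpose, hB, hA,
        Matrix.mul_inv_rev]
    have hdd : ∑ i, (d i)^2 = d ⬝ᵥ d := by
      simp [dotProduct, sq]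
    rw [hdd]
    have : d ⬝ᵥ d = Q ε := by
      rw [hQ, hd]
      rw [Matrix.dotProduct_mulVec]
      have h1 : M *ᵥ a = a ᵥ* Mᵀ := (Matrix.vecMul_transpose M a).symm
      rw [h1, Matrix.vecMul_vecMul, hMM, ← Matrix.dotProduct_mulVec]
    rw [this]
    exact hε
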